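/- Let (Aₙ)ₙ be a sequence of lower-triangular nonnegative column-allowable 2×2 matrices Aₙ = [[aₙ,0],[cₙ,dₙ]] with aₙ > 0 for all n. If dₖ/aₖ ≥ 1 for every k and ∑ₖ cₖ/aₖ = ∞, then d_columns(A₁A₂⋯Aₙ) → 0 and d_columns(AₙAₙ₋₁⋯A₁) → 0 as n → ∞. -/

import Mathlib

open Matrix Filter

/-- A 2×2 real matrix is nonnegative and column-allowable. -/
def ColAllowable (A : Matrix (Fin 2) (Fin 2) ℝ) : Prop :=
  (∀ i j, 0 ≤ A i j) ∧ 0 < A 0 0 + A 1 0 ∧ 0 < A 0 1 + A 1 1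

/-- The distance between the (normalized) columns of `A`. -/
noncomputable def dcols (A : Matrix (Fin 2) (Fin 2) ℝ) : ℝ :=
  |A.det| / ((A 0 0 + A 1 0) * (A 0 1 + A 1 1))

theorem stmt6 (A : ℕ → Matrix (Fin 2) (Fin 2) ℝ)
    (hA : ∀ n, ColAllowable (A n))
    (htri : ∀ n, A n 0 1 = 0) (ha : ∀ n, 0 < A n 0 0)
    (hratio : ∀ k, 1 ≤ A k 1 1 / A k 0 0)
    (hsum : Tendsto (fun n => ∑ k ∈ Finset.range n, A k 1 0 / A k 0 0)
      atTop atTop) :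
    Tendsto (fun n => dcols (((List.range n).map A).prod)) atTop (nhds 0) ∧
    Tendsto (fun n => dcols (((List.range n).reverse.map A).prod)) atTop (nhds 0) := by
  have hd : ∀ k, A k 0 0 ≤ A k 1 1 := fun k => (one_le_div (ha k)).mp (hratio k)
  have hc : ∀ k, 0 ≤ A k 1 0 := fun k => (hA k).1 1 0
  set S : ℕ → ℝ := fun n => ∑ k ∈ Finset.range n, A k 1 0 / A k 0 0 with hSdef
  have hS0 : ∀ n, 0 ≤ S n := fun n =>
    Finset.sum_nonneg fun k _ => div_nonneg (hc k) (ha k).le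
  have hSsucc : ∀ n, S (n + 1) = S n + A n 1 0 / A n 0 0 := fun n =>
    Finset.sum_range_succ _ n
  -- invariant implies bounds on dcols
  have bound : ∀ (n : ℕ) (M : Matrix (Fin 2) (Fin 2) ℝ),
      M 0 1 = 0 → 0 < M 0 0 → M 0 0 ≤ M 1 1 → S n * M 0 0 ≤ M 1 0 →
      0 ≤ dcols M ∧ dcols M ≤ 1 / (1 + S n) := by
    intro n M h01 h00 h11 h10
    have hr : 0 < M 1 1 := lt_of_lt_of_le h00 h11
    have hq : 0 ≤ M 1 0 := le_trans (mul_nonneg (hS0 n) h00.le) h10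
    have hdet : M.det = M 0 0 * M 1 1 := by
      rw [Matrix.det_fin_two, h01]; ring
    have h1S : 0 < 1 + S n := by linarith [hS0 n]
    constructor
    · apply div_nonneg (abs_nonneg _)
      rw [h01, zero_add]
      exact mul_nonneg (by linarith) hr.le
    · rw [dcols, hdet, h01, abs_of_nonneg (mul_nonneg h00.le hr.le), zero_add,
        div_le_div_iff₀ (mul_pos (by linarith) hr) h1S]
      nlinarith [mul_le_mul_of_nonneg_right h10 hr.le]
  -- right multiplication step
  have stepR : ∀ (n : ℕ) (M : Matrix (Fin 2) (Fin 2) ℝ),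
      M 0 1 = 0 → 0 < M 0 0 → M 0 0 ≤ M 1 1 → S n * M 0 0 ≤ M 1 0 →
      (M * A n) 0 1 = 0 ∧ 0 < (M * A n) 0 0 ∧ (M * A n) 0 0 ≤ (M * A n) 1 1 ∧
        S (n + 1) * (M * A n) 0 0 ≤ (M * A n) 1 0 := by
    intro n M h01 h00 h11 h10
    have e : ∀ i j, (M * A n) i j = M i 0 * A n 0 j + M i 1 * A n 1 j := by
      intro i j; simp [Matrix.mul_apply, Fin.sum_univ_two]
    have ha' := ha n; have hc' := hc n; have hd' := hd n; have ht := htri n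
    have hq : 0 ≤ M 1 0 := le_trans (mul_nonneg (hS0 n) h00.le) h10
    have hcdiv : A n 1 0 / A n 0 0 * A n 0 0 = A n 1 0 :=
      div_mul_cancel₀ _ (ha n).ne'
    refine ⟨?_, ?_, ?_, ?_⟩
    · rw [e, h01, ht]; ring
    · rw [e, h01]; nlinarith
    · rw [e, e, ht, h01]; nlinarith
    · rw [e, e, h01, hSsucc]
      nlinarith [mul_le_mul_of_nonneg_right h10 ha'.le,
        mul_le_mul_of_nonneg_left h11 hc', hcdiv,
        mul_le_mul_of_nonneg_left h00.le (hS0 n)]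
  -- left multiplication step
  have stepL : ∀ (n : ℕ) (M : Matrix (Fin 2) (Fin 2) ℝ),
      M 0 1 = 0 → 0 < M 0 0 → M 0 0 ≤ M 1 1 → S n * M 0 0 ≤ M 1 0 →
      (A n * M) 0 1 = 0 ∧ 0 < (A n * M) 0 0 ∧ (A n * M) 0 0 ≤ (A n * M) 1 1 ∧
        S (n + 1) * (A n * M) 0 0 ≤ (A n * M) 1 0 := by
    intro n M h01 h00 h11 h10
    have e : ∀ i j, (A n * M) i j = A n i 0 * M 0 j + A n i 1 * M 1 j := by
      intro i j; simp [Matrix.mul_apply, Fin.sum_univ_two]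
    have ha' := ha n; have hc' := hc n; have hd' := hd n; have ht := htri n
    have hq : 0 ≤ M 1 0 := le_trans (mul_nonneg (hS0 n) h00.le) h10
    have hcdiv : A n 1 0 / A n 0 0 * A n 0 0 = A n 1 0 :=
      div_mul_cancel₀ _ (ha n).ne'
    refine ⟨?_, ?_, ?_, ?_⟩
    · rw [e, h01, ht]; ring
    · rw [e, ht]; nlinarith
    · rw [e, e, ht, h01]; nlinarith
    · rw [e, e, ht, hSsucc]
      nlinarith [mul_le_mul_of_nonneg_left h10 (le_trans ha'.le hd'),
        hcdiv, mul_le_mul_of_nonneg_left h00.le (hS0 n)]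
  -- invariants for the two products
  have fwd : ∀ n, (((List.range n).map A).prod) 0 1 = 0 ∧
      0 < (((List.range n).map A).prod) 0 0 ∧
      (((List.range n).map A).prod) 0 0 ≤ (((List.range n).map A).prod) 1 1 ∧
      S n * (((List.range n).map A).prod) 0 0 ≤ (((List.range n).map A).prod) 1 0 := by
    intro n
    induction n with
    | zero => simp [Matrix.one_apply, hSdef]
    | succ n ih =>
      obtain ⟨h01, h00, h11, h10⟩ := ih
      have hstep : ((List.range (n + 1)).map A).prod
          = ((List.range n).map A).prod * A n := by
        rw [List.range_succ]; simp
      rw [hstep]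
      exact stepR n _ h01 h00 h11 h10
  have bwd : ∀ n, (((List.range n).reverse.map A).prod) 0 1 = 0 ∧
      0 < (((List.range n).reverse.map A).prod) 0 0 ∧
      (((List.range n).reverse.map A).prod) 0 0 ≤ (((List.range n).reverse.map A).prod) 1 1 ∧
      S n * (((List.range n).reverse.map A).prod) 0 0 ≤ (((List.range n).reverse.map A).prod) 1 0 := by
    intro n
    induction n with
    | zero => simp [Matrix.one_apply, hSdef]
    | succ n ih =>
      obtain ⟨h01, h00, h11, h10⟩ := ih
      have hstep : ((List.range (n + 1)).reverse.map A).prod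
          = A n * ((List.range n).reverse.map A).prod := by
        rw [List.range_succ]; simp
      rw [hstep]
      exact stepL n _ h01 h00 h11 h10
  have hlim : Tendsto (fun n => 1 / (1 + S n)) atTop (nhds 0) := by
    simp only [one_div]
    exact (tendsto_atTop_add_const_left atTop 1 hsum).inv_tendsto_atTop
  constructor
  · refine squeeze_zero (fun n => ?_) (fun n => ?_) hlim
    · obtain ⟨h01, h00, h11, h10⟩ := fwd n
      exact (bound n _ h01 h00 h11 h10).1
    · obtain ⟨h01, h00, h11, h10⟩ := fwd n
      exact (bound n _ h01 h00 h11 h10).2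
  · refine squeeze_zero (fun n => ?_) (fun n => ?_) hlim
    · obtain ⟨h01, h00, h11, h10⟩ := bwd n
      exact (bound n _ h01 h00 h11 h10).1
    · obtain ⟨h01, h00, h11, h10⟩ := bwd n
      exact (bound n _ h01 h00 h11 h10).2
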